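/- As the real variable n tends to +∞, the following limits hold: d(n)/√n → 1, d(n) − √n → 0, and √n·(d(n) − √n) → −1/2. -/

import Mathlib

open MeasureTheory Filter

noncomputable section

def dd1 (n : ℝ) : ℝ :=
  -108*n^6 + 1296*n^5 - 3024*n^4 - 10368*n^3 + 103104*n^2 + 20736*n - 94976

def dd2 (n : ℝ) : ℝ :=
  9*n^12 - 216*n^11 + 1800*n^10 - 4320*n^9 - 30864*n^8 + 251136*n^7 - 690432*n^6
    - 1936384*n^5 + 6915840*n^4 + 4818944*n^3 - 16644096*n^2 - 3039232*n + 6131712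

/-- `d₀(n)`, the real cube root of `-(d₁(n) + 36√(d₂(n)))`. -/
def dd0 (n : ℝ) : ℝ := (-(dd1 n + 36 * Real.sqrt (dd2 n))) ^ ((1 : ℝ)/3)

def dfn (n : ℝ) : ℝ :=
  (1/6) * Real.sqrt (9*n^2 + 96 - (1536 + 1152*n^2) / dd0 n - (3/2) * dd0 n)

/-- The Joseph–Lundgren exponent `p_c(n)` (for `n ≥ 15`; `p_c(n) = +∞` for `n ≤ 14`,
which is encoded by imposing the bound `p < pc n` only when `15 ≤ n`). -/
def pc (n : ℝ) : ℝ := (n + 4 - 2 * dfn n) / (n - 8 - 2 * dfn n)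

/-! ### Auxiliary definitions -/

/-- The "conjugate" cube root `w(n) = (36√(d₂(n)) − d₁(n))^{1/3}`. -/
def ww (n : ℝ) : ℝ := (36 * Real.sqrt (dd2 n) - dd1 n) ^ ((1 : ℝ)/3)

/-- Simplified form of the argument of the square root in `dfn`. -/
def AA (n : ℝ) : ℝ := 9*n^2 + 96 - 3/2 * ww n - (1152*n^2 + 1536) / ww n

def vv (n : ℝ) : ℝ := 6*n^2 - 24*n - 40

def PP (n : ℝ) : ℝ :=
  108*n^6 - 1296*n^5 + 3024*n^4 + 10368*n^3 + 62784*n^2 - 94464*n - 158976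

def RR (n : ℝ) : ℝ :=
  -35831808*n^8 + 445906944*n^7 - 1592524800*n^6 - 3652190208*n^5 + 7941390336*n^4
    + 21403533312*n^3 - 10531897344*n^2 - 33973862400*n - 17326669824

/-! ### Elementary positivity facts -/

lemma pow_chain {n : ℝ} (hn : 100 ≤ n) (k : ℕ) : 100 * n^k ≤ n^(k+1) := by
  have h0 : (0:ℝ) ≤ n := by linarith
  have hk : (0:ℝ) ≤ n^k := pow_nonneg h0 k
  calc 100 * n^k ≤ n * n^k := by nlinarith
  _ = n^(k+1) := by ring

lemma dd2_pos {n : ℝ} (hn : 100 ≤ n) : 0 < dd2 n := by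
  have h0 := pow_chain hn 0
  have h1 := pow_chain hn 1
  have h2 := pow_chain hn 2
  have h3 := pow_chain hn 3
  have h4 := pow_chain hn 4
  have h5 := pow_chain hn 5
  have h6 := pow_chain hn 6
  have h7 := pow_chain hn 7
  have h8 := pow_chain hn 8
  have h9 := pow_chain hn 9
  have h10 := pow_chain hn 10
  have h11 := pow_chain hn 11
  unfold dd2
  norm_num at *
  linarith

lemma dd1_neg {n : ℝ} (hn : 100 ≤ n) : dd1 n < 0 := by
  have h0 := pow_chain hn 0
  have h1 := pow_chain hn 1
  have h2 := pow_chain hn 2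
  have h3 := pow_chain hn 3
  have h4 := pow_chain hn 4
  have h5 := pow_chain hn 5
  unfold dd1
  norm_num at *
  linarith

lemma disc_identity (n : ℝ) : dd1 n ^ 2 - 1296 * dd2 n = 16777216 * (3*n^2+4)^3 := by
  unfold dd1 dd2; ring

lemma X_pos {n : ℝ} (hn : 100 ≤ n) : 0 < -(dd1 n + 36 * Real.sqrt (dd2 n)) := by
  have h2 := dd2_pos hn
  have h1 := dd1_neg hn
  have hs : Real.sqrt (dd2 n) < -(dd1 n) / 36 := by
    rw [show -(dd1 n)/36 = |(-(dd1 n)/36)| by rw [abs_of_pos (by linarith : (0:ℝ) < -(dd1 n)/36)]]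
    rw [← Real.sqrt_sq_eq_abs]
    apply Real.sqrt_lt_sqrt h2.le
    have := disc_identity n
    nlinarith [pow_pos (show (0:ℝ) < 3*n^2+4 by positivity) 3]
  linarith

lemma Y_pos {n : ℝ} (hn : 100 ≤ n) : 0 < 36 * Real.sqrt (dd2 n) - dd1 n := by
  have := Real.sqrt_nonneg (dd2 n); have := dd1_neg hn; linarith

lemma ww_pos {n : ℝ} (hn : 100 ≤ n) : 0 < ww n :=
  Real.rpow_pos_of_pos (Y_pos hn) _

lemma cube_rpow {a : ℝ} (ha : 0 ≤ a) : (a ^ (3:ℕ)) ^ ((1:ℝ)/3) = a := by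
  rw [← Real.rpow_natCast a 3, ← Real.rpow_mul ha]
  norm_num

lemma rpow_cube {a : ℝ} (ha : 0 ≤ a) : (a ^ ((1:ℝ)/3)) ^ (3:ℕ) = a := by
  rw [← Real.rpow_natCast (a ^ ((1:ℝ)/3)) 3, ← Real.rpow_mul ha]
  norm_num

lemma dd0_mul_ww {n : ℝ} (hn : 100 ≤ n) : dd0 n * ww n = 256 * (3*n^2+4) := by
  have hX := X_pos hn
  have hY := Y_pos hn
  have hs : Real.sqrt (dd2 n) ^ 2 = dd2 n := Real.sq_sqrt (dd2_pos hn).le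
  have hXY : (-(dd1 n + 36 * Real.sqrt (dd2 n))) * (36 * Real.sqrt (dd2 n) - dd1 n)
      = (256 * (3*n^2+4)) ^ (3:ℕ) := by
    have := disc_identity n
    nlinarith [hs]
  rw [dd0, ww, ← Real.mul_rpow hX.le hY.le, hXY, cube_rpow (by positivity)]

/-- The argument of the square root in `dfn` equals `AA`. -/
lemma arg_eq_AA {n : ℝ} (hn : 100 ≤ n) :
    9*n^2 + 96 - (1536 + 1152*n^2) / dd0 n - (3/2) * dd0 n = AA n := by
  have hw := ww_pos hn
  have hK : (0:ℝ) < 256 * (3*n^2+4) := by positivity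
  have hdd0 : dd0 n = 256 * (3*n^2+4) / ww n := by
    field_simp [← dd0_mul_ww hn]
    exact dd0_mul_ww hn
  rw [hdd0, AA]
  field_simp
  ring

/-! ### Limit computations -/

lemma tendsto_of_sub_bound {f : ℝ → ℝ} {a C : ℝ}
    (h : ∀ᶠ n in atTop, |f n - a| ≤ C / n) : Tendsto f atTop (nhds a) := by
  have h0 : Tendsto (fun n : ℝ => f n - a) atTop (nhds 0) :=
    squeeze_zero_norm' h (Tendsto.div_atTop tendsto_const_nhds tendsto_id)
  have := h0.add (tendsto_const_nhds (x := a))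
  simpa using this

lemma poly_div_bound {p : ℝ → ℝ} {a C : ℝ} {d : ℕ} (hd : d ≠ 0) {n : ℝ} (hn : 1 ≤ n)
    (h : |p n - a * n ^ d| ≤ C * n ^ (d - 1)) : |p n / n ^ d - a| ≤ C / n := by
  have hn0 : (0:ℝ) < n := by linarith
  have hnd : (0:ℝ) < n ^ d := by positivity
  have : p n / n ^ d - a = (p n - a * n ^ d) / n ^ d := by field_simp
  rw [this, abs_div, abs_of_pos hnd, div_le_div_iff₀ hnd hn0]
  calc |p n - a * n ^ d| * n ≤ (C * n ^ (d-1)) * n := by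
        have : (0:ℝ) ≤ n := hn0.le
        nlinarith [abs_nonneg (p n - a * n ^ d)]
    _ = C * n ^ d := by
        rw [mul_assoc, ← pow_succ]
        congr 2
        omega

lemma mono_pow {n : ℝ} (hn : 1 ≤ n) {j k : ℕ} (h : j ≤ k) : n^j ≤ n^k :=
  pow_le_pow_right₀ hn h

lemma T_dd2 : Tendsto (fun n : ℝ => dd2 n / n ^ 12) atTop (nhds 9) := by
  apply tendsto_of_sub_bound (C := 10^8)
  filter_upwards [eventually_ge_atTop (1:ℝ)] with n hn
  apply poly_div_bound (by norm_num) hn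
  norm_num
  have l1 : n^1 ≤ n^11 := mono_pow hn (by norm_num)
  have l2 : n^2 ≤ n^11 := mono_pow hn (by norm_num)
  have l3 : n^3 ≤ n^11 := mono_pow hn (by norm_num)
  have l4 : n^4 ≤ n^11 := mono_pow hn (by norm_num)
  have l5 : n^5 ≤ n^11 := mono_pow hn (by norm_num)
  have l6 : n^6 ≤ n^11 := mono_pow hn (by norm_num)
  have l7 : n^7 ≤ n^11 := mono_pow hn (by norm_num)
  have l8 : n^8 ≤ n^11 := mono_pow hn (by norm_num)
  have l9 : n^9 ≤ n^11 := mono_pow hn (by norm_num)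
  have l10 : n^10 ≤ n^11 := mono_pow hn (by norm_num)
  have g1 : (1:ℝ) ≤ n^1 := one_le_pow₀ hn
  have g2 : (1:ℝ) ≤ n^2 := one_le_pow₀ hn
  have g3 : (1:ℝ) ≤ n^3 := one_le_pow₀ hn
  have g4 : (1:ℝ) ≤ n^4 := one_le_pow₀ hn
  have g5 : (1:ℝ) ≤ n^5 := one_le_pow₀ hn
  have g6 : (1:ℝ) ≤ n^6 := one_le_pow₀ hn
  have g7 : (1:ℝ) ≤ n^7 := one_le_pow₀ hn
  have g8 : (1:ℝ) ≤ n^8 := one_le_pow₀ hn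
  have g9 : (1:ℝ) ≤ n^9 := one_le_pow₀ hn
  have g10 : (1:ℝ) ≤ n^10 := one_le_pow₀ hn
  have g11 : (1:ℝ) ≤ n^11 := one_le_pow₀ hn
  have ln : n ≤ n^11 := by
    calc n = n^1 := (pow_one n).symm
    _ ≤ n^11 := l1
  unfold dd2
  rw [abs_le]
  constructor <;> linarith

lemma T_dd1 : Tendsto (fun n : ℝ => dd1 n / n ^ 6) atTop (nhds (-108)) := by
  apply tendsto_of_sub_bound (C := 10^6)
  filter_upwards [eventually_ge_atTop (1:ℝ)] with n hn
  apply poly_div_bound (by norm_num) hn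
  norm_num
  have l1 : n^1 ≤ n^5 := mono_pow hn (by norm_num)
  have l2 : n^2 ≤ n^5 := mono_pow hn (by norm_num)
  have l3 : n^3 ≤ n^5 := mono_pow hn (by norm_num)
  have l4 : n^4 ≤ n^5 := mono_pow hn (by norm_num)
  have g1 : (1:ℝ) ≤ n^1 := one_le_pow₀ hn
  have g2 : (1:ℝ) ≤ n^2 := one_le_pow₀ hn
  have g3 : (1:ℝ) ≤ n^3 := one_le_pow₀ hn
  have g4 : (1:ℝ) ≤ n^4 := one_le_pow₀ hn
  have g5 : (1:ℝ) ≤ n^5 := one_le_pow₀ hn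
  have ln : n ≤ n^5 := by
    calc n = n^1 := (pow_one n).symm
    _ ≤ n^5 := l1
  unfold dd1
  rw [abs_le]
  constructor <;> linarith

lemma T_PP : Tendsto (fun n : ℝ => PP n / n ^ 6) atTop (nhds 108) := by
  apply tendsto_of_sub_bound (C := 10^6)
  filter_upwards [eventually_ge_atTop (1:ℝ)] with n hn
  apply poly_div_bound (by norm_num) hn
  norm_num
  have l1 : n^1 ≤ n^5 := mono_pow hn (by norm_num)
  have l2 : n^2 ≤ n^5 := mono_pow hn (by norm_num)
  have l3 : n^3 ≤ n^5 := mono_pow hn (by norm_num)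
  have l4 : n^4 ≤ n^5 := mono_pow hn (by norm_num)
  have g1 : (1:ℝ) ≤ n^1 := one_le_pow₀ hn
  have g2 : (1:ℝ) ≤ n^2 := one_le_pow₀ hn
  have g3 : (1:ℝ) ≤ n^3 := one_le_pow₀ hn
  have g4 : (1:ℝ) ≤ n^4 := one_le_pow₀ hn
  have g5 : (1:ℝ) ≤ n^5 := one_le_pow₀ hn
  have ln : n ≤ n^5 := by
    calc n = n^1 := (pow_one n).symm
    _ ≤ n^5 := l1
  unfold PP
  rw [abs_le]
  constructor <;> linarith

lemma T_RR : Tendsto (fun n : ℝ => RR n / n ^ 10) atTop (nhds 0) := by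
  apply tendsto_of_sub_bound (C := 10^11)
  filter_upwards [eventually_ge_atTop (1:ℝ)] with n hn
  apply poly_div_bound (by norm_num) hn
  norm_num
  have l1 : n^1 ≤ n^9 := mono_pow hn (by norm_num)
  have l2 : n^2 ≤ n^9 := mono_pow hn (by norm_num)
  have l3 : n^3 ≤ n^9 := mono_pow hn (by norm_num)
  have l4 : n^4 ≤ n^9 := mono_pow hn (by norm_num)
  have l5 : n^5 ≤ n^9 := mono_pow hn (by norm_num)
  have l6 : n^6 ≤ n^9 := mono_pow hn (by norm_num)
  have l7 : n^7 ≤ n^9 := mono_pow hn (by norm_num)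
  have l8 : n^8 ≤ n^9 := mono_pow hn (by norm_num)
  have g1 : (1:ℝ) ≤ n^1 := one_le_pow₀ hn
  have g2 : (1:ℝ) ≤ n^2 := one_le_pow₀ hn
  have g3 : (1:ℝ) ≤ n^3 := one_le_pow₀ hn
  have g4 : (1:ℝ) ≤ n^4 := one_le_pow₀ hn
  have g5 : (1:ℝ) ≤ n^5 := one_le_pow₀ hn
  have g6 : (1:ℝ) ≤ n^6 := one_le_pow₀ hn
  have g7 : (1:ℝ) ≤ n^7 := one_le_pow₀ hn
  have g8 : (1:ℝ) ≤ n^8 := one_le_pow₀ hn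
  have g9 : (1:ℝ) ≤ n^9 := one_le_pow₀ hn
  have ln : n ≤ n^9 := by
    calc n = n^1 := (pow_one n).symm
    _ ≤ n^9 := l1
  unfold RR
  rw [abs_le]
  constructor <;> linarith

lemma T_vv : Tendsto (fun n : ℝ => vv n / n ^ 2) atTop (nhds 6) := by
  apply tendsto_of_sub_bound (C := 64)
  filter_upwards [eventually_ge_atTop (1:ℝ)] with n hn
  apply poly_div_bound (by norm_num) hn
  norm_num
  have g1 : (1:ℝ) ≤ n := hn
  unfold vv
  rw [abs_le]
  constructor <;> nlinarith

lemma T_sqrt_dd2 : Tendsto (fun n : ℝ => Real.sqrt (dd2 n) / n ^ 6) atTop (nhds 3) := by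
  have h := (Real.continuous_sqrt.tendsto 9).comp T_dd2
  have h9 : Real.sqrt 9 = 3 := by
    rw [show (9:ℝ) = 3^2 by norm_num, Real.sqrt_sq (by norm_num : (0:ℝ) ≤ 3)]
  rw [h9] at h
  refine h.congr' ?_
  filter_upwards [eventually_ge_atTop (100:ℝ)] with n hn
  show Real.sqrt (dd2 n / n ^ 12) = Real.sqrt (dd2 n) / n ^ 6
  rw [Real.sqrt_div (dd2_pos hn).le, show (n:ℝ)^12 = (n^6)^2 by ring,
    Real.sqrt_sq (by positivity)]

lemma T_Y : Tendsto (fun n : ℝ => (36 * Real.sqrt (dd2 n) - dd1 n) / n ^ 6) atTop (nhds 216) := by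
  have h := (T_sqrt_dd2.const_mul 36).sub T_dd1
  norm_num at h
  refine h.congr ?_
  intro n
  ring

lemma rpow_216 : (216:ℝ) ^ ((1:ℝ)/3) = 6 := by
  rw [show (216:ℝ) = 6^(3:ℕ) by norm_num, cube_rpow (by norm_num : (0:ℝ) ≤ 6)]

lemma T_ww : Tendsto (fun n : ℝ => ww n / n ^ 2) atTop (nhds 6) := by
  have hcont : ContinuousAt (fun x : ℝ => x ^ ((1:ℝ)/3)) 216 :=
    Real.continuousAt_rpow_const 216 _ (Or.inl (by norm_num))
  have h := hcont.tendsto.comp T_Y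
  rw [rpow_216] at h
  refine h.congr' ?_
  filter_upwards [eventually_ge_atTop (100:ℝ)] with n hn
  show ((36 * Real.sqrt (dd2 n) - dd1 n) / n ^ 6) ^ ((1:ℝ)/3) = ww n / n ^ 2
  have hn6 : (0:ℝ) ≤ n ^ 6 := by positivity
  rw [Real.div_rpow (Y_pos hn).le hn6, ww, show (n:ℝ)^6 = (n^2)^(3:ℕ) by ring,
    cube_rpow (by positivity)]

lemma T_D1 : Tendsto (fun n : ℝ => (ww n ^ 2 + ww n * vv n + vv n ^ 2) / n ^ 4)
    atTop (nhds 108) := by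
  have h := ((T_ww.mul T_ww).add (T_ww.mul T_vv)).add (T_vv.mul T_vv)
  norm_num at h
  refine h.congr' ?_
  filter_upwards [eventually_ge_atTop (1:ℝ)] with n hn
  have hn0 : n ≠ 0 := by linarith
  field_simp

lemma T_D2 : Tendsto (fun n : ℝ => (36 * Real.sqrt (dd2 n) + PP n) / n ^ 6)
    atTop (nhds 216) := by
  have h := (T_sqrt_dd2.const_mul 36).add T_PP
  norm_num at h
  refine h.congr ?_
  intro n
  ring

lemma T_e : Tendsto (fun n : ℝ => ww n - vv n) atTop (nhds 0) := by
  have hD1pos : ∀ᶠ n in atTop, 0 < (ww n ^ 2 + ww n * vv n + vv n ^ 2) / n ^ 4 :=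
    T_D1.eventually (eventually_gt_nhds (by norm_num))
  have hD2pos : ∀ᶠ n in atTop, 0 < (36 * Real.sqrt (dd2 n) + PP n) / n ^ 6 :=
    T_D2.eventually (eventually_gt_nhds (by norm_num))
  have h := T_RR.div (T_D2.mul T_D1) (by norm_num : (216:ℝ) * 108 ≠ 0)
  norm_num at h
  refine h.congr' ?_
  filter_upwards [hD1pos, hD2pos, eventually_ge_atTop (100:ℝ)] with n h1 h2 hn
  have hn0 : (0:ℝ) < n := by linarith
  have hD1 : 0 < ww n ^ 2 + ww n * vv n + vv n ^ 2 := by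
    have : (0:ℝ) < n ^ 4 := by positivity
    have := mul_pos h1 this
    rwa [div_mul_cancel₀] at this
    positivity
  have hD2 : 0 < 36 * Real.sqrt (dd2 n) + PP n := by
    have : (0:ℝ) < n ^ 6 := by positivity
    have := mul_pos h2 this
    rwa [div_mul_cancel₀] at this
    positivity
  have hww3 : ww n ^ (3:ℕ) = 36 * Real.sqrt (dd2 n) - dd1 n := rpow_cube (Y_pos hn).le
  have hs2 : Real.sqrt (dd2 n) ^ 2 = dd2 n := Real.sq_sqrt (dd2_pos hn).le
  have key : (ww n - vv n) * ((36 * Real.sqrt (dd2 n) + PP n)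
      * (ww n ^ 2 + ww n * vv n + vv n ^ 2)) = RR n := by
    have expand : (ww n - vv n) * ((36 * Real.sqrt (dd2 n) + PP n)
        * (ww n ^ 2 + ww n * vv n + vv n ^ 2))
        = (ww n ^ (3:ℕ) - vv n ^ 3) * (36 * Real.sqrt (dd2 n) + PP n) := by ring
    rw [expand, hww3]
    unfold vv PP RR dd1 dd2 at *
    linear_combination (1296:ℝ) * hs2
  show RR n / n ^ 10 /
      ((36 * Real.sqrt (dd2 n) + PP n) / n ^ 6 * ((ww n ^ 2 + ww n * vv n + vv n ^ 2) / n ^ 4))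
      = ww n - vv n
  rw [← key]
  field_simp
  ring_nf
  rw [← sub_mul, ← div_eq_mul_inv, div_eq_iff (by linarith : (0:ℝ) < ww n * vv n + ww n ^ 2 + vv n ^ 2).ne']
  ring

lemma T_q : Tendsto (fun n : ℝ => (1152*n^2 + 1536) / ww n) atTop (nhds 192) := by
  have hnum : Tendsto (fun n : ℝ => 1152 + 1536 / n^2) atTop (nhds 1152) := by
    have := (tendsto_const_nhds (x := (1152:ℝ)) (f := atTop)).add
      (Tendsto.div_atTop (tendsto_const_nhds (x := (1536:ℝ)))
        (tendsto_pow_atTop (two_ne_zero) (α := ℝ)))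
    simpa using this
  have h := hnum.div T_ww (by norm_num : (6:ℝ) ≠ 0)
  norm_num at h
  refine h.congr' ?_
  filter_upwards [eventually_ge_atTop (100:ℝ)] with n hn
  have hn0 : (0:ℝ) < n := by linarith
  have hw := ww_pos hn
  show (1152 + 1536 / n ^ 2) / (ww n / n ^ 2) = (1152*n^2 + 1536) / ww n
  field_simp

lemma T_AA : Tendsto (fun n : ℝ => AA n - 36 * n) atTop (nhds (-36)) := by
  have h := (tendsto_const_nhds (x := (156:ℝ)) (f := atTop)).sub
    ((T_e.const_mul (3/2)).add T_q)
  norm_num at h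
  refine h.congr' ?_
  filter_upwards [eventually_ge_atTop (100:ℝ)] with n hn
  show 156 - (3/2 * (ww n - vv n) + (1152*n^2 + 1536) / ww n) = AA n - 36 * n
  unfold AA vv
  ring

lemma dfn_sq : ∀ᶠ n in atTop, dfn n ^ 2 - n = (AA n - 36 * n) / 36 := by
  have hAApos : ∀ᶠ n in atTop, -37 < AA n - 36 * n :=
    T_AA.eventually (eventually_gt_nhds (by norm_num))
  filter_upwards [hAApos, eventually_ge_atTop (100:ℝ)] with n h1 hn
  have hAA : 0 ≤ AA n := by nlinarith
  have : dfn n = (1/6) * Real.sqrt (AA n) := by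
    rw [dfn, arg_eq_AA hn]
  rw [this, mul_pow, Real.sq_sqrt hAA]
  ring

lemma T_main : Tendsto (fun n : ℝ => dfn n ^ 2 - n) atTop (nhds (-1)) := by
  have h := T_AA.div_const 36
  norm_num at h
  exact Tendsto.congr' (by filter_upwards [dfn_sq] with n hn; rw [hn]) h

lemma dfn_nonneg (n : ℝ) : 0 ≤ dfn n := by
  rw [dfn]
  positivity

lemma sqrt_tendsto_atTop : Tendsto Real.sqrt atTop atTop := by
  have h := tendsto_rpow_atTop (show (0:ℝ) < 1/2 by norm_num)
  refine h.congr' ?_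
  filter_upwards with n
  rw [Real.sqrt_eq_rpow]

/-- **Lemma 8.2.** Asymptotics of `d(n)` as `n → +∞`:
`d(n)/√n → 1`, `d(n) - √n → 0` and `√n·(d(n) - √n) → -1/2`. -/
theorem dfn_asymptotics :
    Tendsto (fun n : ℝ => dfn n / Real.sqrt n) atTop (nhds 1) ∧
    Tendsto (fun n : ℝ => dfn n - Real.sqrt n) atTop (nhds 0) ∧
    Tendsto (fun n : ℝ => Real.sqrt n * (dfn n - Real.sqrt n)) atTop (nhds (-(1 / 2))) := by
  -- dfn n ^ 2 / n → 1
  have hsq : Tendsto (fun n : ℝ => dfn n ^ 2 / n) atTop (nhds 1) := by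
    have h := (T_main.div_atTop tendsto_id).add (tendsto_const_nhds (x := (1:ℝ)))
    norm_num at h
    refine h.congr' ?_
    filter_upwards [eventually_ge_atTop (1:ℝ)] with n hn
    have hn0 : n ≠ 0 := by linarith
    show (dfn n ^ 2 - n) / n + 1 = dfn n ^ 2 / n
    field_simp
    ring
  -- first limit
  have h1 : Tendsto (fun n : ℝ => dfn n / Real.sqrt n) atTop (nhds 1) := by
    have h := (Real.continuous_sqrt.tendsto 1).comp hsq
    rw [Real.sqrt_one] at h
    refine h.congr' ?_
    filter_upwards [eventually_ge_atTop (1:ℝ)] with n hn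
    have hn0 : (0:ℝ) < n := by linarith
    show Real.sqrt (dfn n ^ 2 / n) = dfn n / Real.sqrt n
    rw [Real.sqrt_div (by positivity), Real.sqrt_sq (dfn_nonneg n)]
  -- dfn + sqrt tends to atTop
  have hat : Tendsto (fun n : ℝ => dfn n + Real.sqrt n) atTop atTop := by
    apply tendsto_atTop_mono (fun n => ?_) sqrt_tendsto_atTop
    have := dfn_nonneg n
    linarith
  -- eventual identity for dfn - sqrt
  have hid : ∀ᶠ n in atTop, dfn n - Real.sqrt n = (dfn n ^ 2 - n) / (dfn n + Real.sqrt n) := by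
    filter_upwards [eventually_ge_atTop (1:ℝ)] with n hn
    have hn0 : (0:ℝ) < n := by linarith
    have hs : (0:ℝ) < Real.sqrt n := Real.sqrt_pos.mpr hn0
    have hden : dfn n + Real.sqrt n ≠ 0 := by
      have := dfn_nonneg n; linarith
    rw [eq_div_iff hden]
    have : Real.sqrt n ^ 2 = n := Real.sq_sqrt hn0.le
    nlinarith
  -- second limit
  have h2 : Tendsto (fun n : ℝ => dfn n - Real.sqrt n) atTop (nhds 0) := by
    have h := T_main.div_atTop hat
    exact Tendsto.congr' (by filter_upwards [hid] with n hn; rw [hn]) h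
  refine ⟨h1, h2, ?_⟩
  -- third limit
  have hden : Tendsto (fun n : ℝ => dfn n / Real.sqrt n + 1) atTop (nhds 2) := by
    have := h1.add (tendsto_const_nhds (x := (1:ℝ)))
    norm_num at this
    exact this
  have h := T_main.div hden (by norm_num : (2:ℝ) ≠ 0)
  have : (-1:ℝ)/2 = -(1/2) := by norm_num
  rw [this] at h
  refine h.congr' ?_
  filter_upwards [eventually_ge_atTop (1:ℝ)] with n hn
  have hn0 : (0:ℝ) < n := by linarith
  have hs : (0:ℝ) < Real.sqrt n := Real.sqrt_pos.mpr hn0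
  have hden0 : (0:ℝ) < dfn n + Real.sqrt n := by
    have := dfn_nonneg n; linarith
  have hsq : Real.sqrt n ^ 2 = n := Real.sq_sqrt hn0.le
  show (dfn n ^ 2 - n) / (dfn n / Real.sqrt n + 1) = Real.sqrt n * (dfn n - Real.sqrt n)
  rw [show dfn n / Real.sqrt n + 1 = (dfn n + Real.sqrt n) / Real.sqrt n by field_simp]
  rw [div_div_eq_mul_div, div_eq_iff (ne_of_gt hden0)]
  linear_combination Real.sqrt n * hsq
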